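/- Let (a_i)_{i≥1}, (b_i)_{i≥0}, (λ_i)_{i≥1}, (c_i)_{i≥1} be sequences of complex numbers such that there exists ε > 0 with |c_m| ≤ 1/4 − ε for all m ≥ 1 (no boundedness assumption on a, b, λ). Then for all n, r, s ≥ 0 the family (wt(p))_{p∈RΓ_{n,r,s}} of weights of restricted R_II paths is summable in ℂ. -/

import Mathlib

open Polynomial

/-- Steps of an `R_II` path: up, horizontal, down, vertical-down, backward-down. -/
inductive RStep : Type
  | U | H | D | V | B
  deriving DecidableEq

/-- Displacement of each step. -/
def RStep.disp : RStep → ℤ × ℤ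
  | .U => (1, 1)
  | .H => (1, 0)
  | .D => (1, -1)
  | .V => (0, -1)
  | .B => (-1, -1)

instance : Fintype RStep :=
  ⟨⟨{.U, .H, .D, .V, .B}, by decide⟩, by intro x; cases x <;> decide⟩

/-- Summability of multiplicative weights on lists. -/
lemma summable_list_prod (w : RStep → ℝ) (hw : ∀ s, 0 ≤ w s)
    (hsum : (∑ s : RStep, w s) < 1) :
    Summable fun l : List RStep => (l.map w).prod := by
  rw [← (List.equivSigmaTuple (α := RStep)).symm.summable_iff]
  have key : ∀ x : Σ n, Fin n → RStep,
      ((List.equivSigmaTuple.symm x).map w).prod = ∏ i, w (x.2 i) := by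
    rintro ⟨m, f⟩
    simp [List.equivSigmaTuple, List.map_ofFn, List.prod_ofFn, Function.comp]
  have hnn : ∀ x : Σ n, Fin n → RStep,
      0 ≤ ((List.equivSigmaTuple.symm x).map w).prod := by
    intro x
    rw [key]
    exact Finset.prod_nonneg fun i _ => hw _
  rw [Function.comp_def]
  apply (summable_sigma_of_nonneg hnn).mpr
  constructor
  · intro m
    exact Summable.of_finite
  · have heq : ∀ m : ℕ, ∑' f : Fin m → RStep,
        ((List.equivSigmaTuple.symm ⟨m, f⟩).map w).prod = (∑ s : RStep, w s) ^ m := by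
      intro m
      rw [tsum_fintype]
      have : ∑ f : Fin m → RStep, ((List.equivSigmaTuple.symm ⟨m, f⟩).map w).prod
          = ∑ f : Fin m → RStep, ∏ i, w (f i) :=
        Finset.sum_congr rfl fun f _ => key ⟨m, f⟩
      rw [this, ← Fintype.prod_sum (f := fun (_ : Fin m) s => w s), Finset.prod_const,
        Finset.card_univ, Fintype.card_fin]
    simp only [heq]
    exact summable_geometric_of_lt_one (Finset.sum_nonneg fun s _ => hw s) hsum


/-- End point of a lattice path starting at `start` with the given list of steps. -/
def endPt (start : ℤ × ℤ) : List RStep → ℤ × ℤ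
  | [] => start
  | s :: l => endPt (start + s.disp) l

/-- All intermediate heights along the path (starting at height `h`) are nonnegative,
so that the points of the path lie in `ℤ × ℤ≥0`. -/
def heightsNonneg (h : ℤ) : List RStep → Prop
  | [] => True
  | s :: l => 0 ≤ h + s.disp.2 ∧ heightsNonneg (h + s.disp.2) l

/-- `Gamma n r s` is the set of `R_II` paths from `(0, r)` to `(n, s)`. -/
def Gamma (n r s : ℕ) : Set (List RStep) :=
  {l | heightsNonneg (r : ℤ) l ∧ endPt (0, (r : ℤ)) l = ((n : ℤ), (s : ℤ))}

/-- The list of all points visited by a path. -/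
def pathPoints (start : ℤ × ℤ) : List RStep → List (ℤ × ℤ)
  | [] => [start]
  | s :: l => start :: pathPoints (start + s.disp) l

/-- `RGamma n r s` is the set of restricted `R_II` paths from `(0, r)` to `(n, s)`:
paths in `Gamma n r s` whose points have first coordinate `n` only at the final point. -/
def RGamma (n r s : ℕ) : Set (List RStep) :=
  {l | l ∈ Gamma n r s ∧ ∀ p ∈ (pathPoints (0, (r : ℤ)) l).dropLast, p.1 ≠ (n : ℤ)}

/-- Weight of a single step starting at height `h`:
`1` for `U`, `b_i` for `H`, `λ_i` for `D`, `a_i` for `V`, `c_i` for `B` starting at height `i`. -/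
def stepWt {R : Type*} [CommRing R] (a b lam c : ℕ → R) (h : ℤ) : RStep → R
  | .U => 1
  | .H => b h.toNat
  | .D => lam h.toNat
  | .V => a h.toNat
  | .B => c h.toNat

/-- Weight of a path starting at height `h`: the product of the weights of its steps. -/
def pathWt {R : Type*} [CommRing R] (a b lam c : ℕ → R) : ℤ → List RStep → R
  | _, [] => 1
  | h, s :: l => stepWt a b lam c h s * pathWt a b lam c (h + s.disp.2) l

/-- All step-start heights are at most `X`. -/
def hbd (X : ℤ) : ℤ → List RStep → Prop
  | _, [] => True
  | h, s :: l => h ≤ X ∧ hbd X (h + s.disp.2) l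

lemma pathPoints_ne_nil (p : ℤ × ℤ) (l : List RStep) : pathPoints p l ≠ [] := by
  cases l <;> simp [pathPoints]

lemma hbd_of_points (N rr : ℤ) :
    ∀ (l : List RStep) (p : ℤ × ℤ), p.2 ≤ p.1 + rr → p.1 ≤ N →
      (∀ q ∈ (pathPoints p l).dropLast, q.1 ≠ N) → hbd (N + rr) p.2 l := by
  intro l
  induction l with
  | nil => intro p _ _ _; trivial
  | cons s l ih =>
    intro p h1 h2 h3
    have hdrop : (pathPoints p (s :: l)).dropLast = p :: (pathPoints (p + s.disp) l).dropLast := by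
      rw [show pathPoints p (s :: l) = p :: pathPoints (p + s.disp) l from rfl,
        List.dropLast_cons_of_ne_nil (pathPoints_ne_nil _ _)]
    have hpN : p.1 ≠ N := h3 p (by rw [hdrop]; exact List.mem_cons_self)
    have hp1 : p.1 ≤ N - 1 := by omega
    have hd1 : s.disp.2 ≤ s.disp.1 ∧ s.disp.1 ≤ 1 := by cases s <;> simp [RStep.disp]
    constructor
    · omega
    · refine ih (p + s.disp) ?_ ?_ ?_
      · have := hd1.1; simp only [Prod.snd_add, Prod.fst_add]; omega
      · have := hd1.2; simp only [Prod.fst_add]; omega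
      · intro q hq
        exact h3 q (by rw [hdrop]; exact List.mem_cons_of_mem _ hq)

lemma endPt_eq (l : List RStep) : ∀ p : ℤ × ℤ, endPt p l =
    (p.1 + l.count .U + l.count .H + l.count .D - l.count .B,
     p.2 + l.count .U - l.count .D - l.count .V - l.count .B) := by
  induction l with
  | nil => intro p; simp [endPt]
  | cons s l ih =>
    intro p
    rw [show endPt p (s :: l) = endPt (p + s.disp) l from rfl, ih]
    cases s <;>
      simp only [RStep.disp, List.count_cons, Prod.mk.injEq, Prod.fst_add, Prod.snd_add] <;>
      constructor <;> simp <;> push_cast <;> ring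

lemma wt_bound (a b lam c : ℕ → ℂ) (M t : ℝ) (X : ℤ) (hM1 : 1 ≤ M) (ht : 0 ≤ t)
    (ha : ∀ h : ℤ, 0 ≤ h → h ≤ X → ‖a h.toNat‖ ≤ M)
    (hb : ∀ h : ℤ, 0 ≤ h → h ≤ X → ‖b h.toNat‖ ≤ M)
    (hlam : ∀ h : ℤ, 0 ≤ h → h ≤ X → ‖lam h.toNat‖ ≤ M)
    (hc : ∀ h : ℤ, 1 ≤ h → ‖c h.toNat‖ ≤ t) :
    ∀ (l : List RStep) (h : ℤ), 0 ≤ h → heightsNonneg h l → hbd X h l →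
      ‖pathWt a b lam c h l‖ ≤
        M ^ (l.count .H + l.count .D + l.count .V) * t ^ l.count .B := by
  intro l
  induction l with
  | nil => intro h _ _ _; simp [pathWt]
  | cons s l ih =>
    intro h h0 hnn hb'
    obtain ⟨hs1, hs2⟩ := hnn
    obtain ⟨hx1, hx2⟩ := hb'
    have hrec := ih (h + s.disp.2) hs1 hs2 hx2
    have hM0 : (0:ℝ) ≤ M := by linarith
    rw [show pathWt a b lam c h (s :: l) =
      stepWt a b lam c h s * pathWt a b lam c (h + s.disp.2) l from rfl, norm_mul]
    cases s with
    | U =>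
      simp only [List.count_cons, stepWt, norm_one, one_mul]
      simpa using hrec
    | H =>
      simp only [List.count_cons, stepWt]
      calc ‖b h.toNat‖ * ‖pathWt a b lam c (h + (RStep.disp .H).2) l‖
          ≤ M * (M ^ (l.count .H + l.count .D + l.count .V) * t ^ l.count .B) :=
            mul_le_mul (hb h h0 hx1) hrec (norm_nonneg _)  hM0
        _ = _ := by simp; ring
    | D =>
      simp only [List.count_cons, stepWt]
      calc ‖lam h.toNat‖ * ‖pathWt a b lam c (h + (RStep.disp .D).2) l‖
          ≤ M * (M ^ (l.count .H + l.count .D + l.count .V) * t ^ l.count .B) :=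
            mul_le_mul (hlam h h0 hx1) hrec (norm_nonneg _) hM0
        _ = _ := by simp; ring
    | V =>
      simp only [List.count_cons, stepWt]
      calc ‖a h.toNat‖ * ‖pathWt a b lam c (h + (RStep.disp .V).2) l‖
          ≤ M * (M ^ (l.count .H + l.count .D + l.count .V) * t ^ l.count .B) :=
            mul_le_mul (ha h h0 hx1) hrec (norm_nonneg _) hM0
        _ = _ := by simp; ring
    | B =>
      have h1 : 1 ≤ h := by
        have : (RStep.disp .B).2 = -1 := rfl
        omega
      simp only [List.count_cons, stepWt]
      calc ‖c h.toNat‖ * ‖pathWt a b lam c (h + (RStep.disp .B).2) l‖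
          ≤ t * (M ^ (l.count .H + l.count .D + l.count .V) * t ^ l.count .B) :=
            mul_le_mul (hc h h1) hrec (norm_nonneg _) ht
        _ = _ := by simp; ring

lemma prod_map_eq (w : RStep → ℝ) (l : List RStep) :
    (l.map w).prod = w .U ^ l.count .U * w .H ^ l.count .H * w .D ^ l.count .D *
      w .V ^ l.count .V * w .B ^ l.count .B := by
  induction l with
  | nil => simp
  | cons s l ih =>
    rw [List.map_cons, List.prod_cons, ih]
    cases s <;> simp [List.count_cons, pow_succ] <;> ring


set_option maxHeartbeats 1000000 in
/-- If `|c_m| ≤ 1/4 − ε` for all `m ≥ 1` for some fixed `ε > 0` (with no boundedness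
assumption on `a`, `b`, `λ`), then for all `n, r, s ≥ 0` the family of weights of
restricted `R_II` paths `(wt(p))_{p∈RΓ_{n,r,s}}` is summable in ℂ. -/
theorem stmt14 (a b lam c : ℕ → ℂ)
    (ε : ℝ) (hε : 0 < ε) (hc : ∀ m : ℕ, 1 ≤ m → ‖c m‖ ≤ 1 / 4 - ε)
    (n r s : ℕ) :
    Summable fun p : RGamma n r s => pathWt a b lam c (r : ℤ) p.1 := by
  classical
  set ε' := min ε (1/8) with hε'def
  have hε'0 : 0 < ε' := lt_min hε (by norm_num)
  have hε'8 : ε' ≤ 1/8 := min_le_right _ _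
  set t : ℝ := 1/4 - ε' with htdef
  have ht0 : 0 < t := by simp only [htdef]; linarith
  have ht4 : t < 1/4 := by simp only [htdef]; linarith
  set ρ : ℝ := Real.sqrt t with hρdef
  have hρ0 : 0 < ρ := Real.sqrt_pos.mpr ht0
  have hρ2 : ρ ^ 2 = t := Real.sq_sqrt ht0.le
  have hρhalf : ρ < 1/2 := by
    rw [hρdef]
    rw [show (1:ℝ)/2 = Real.sqrt (1/4) by
      rw [show (1:ℝ)/4 = (1/2)^2 by norm_num, Real.sqrt_sq (by norm_num)]]
    exact Real.sqrt_lt_sqrt ht0.le ht4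
  have hρ1 : ρ ≤ 1 := by linarith
  set θ : ℝ := (1 - 2*ρ)/6 with hθdef
  have hθ0 : 0 < θ := by rw [hθdef]; linarith
  have hθ1 : θ ≤ 1 := by rw [hθdef]; linarith
  set w : RStep → ℝ := fun x => match x with
    | .U => ρ | .H => θ | .D => θ | .V => θ | .B => ρ with hwdef
  have hw : ∀ x, 0 ≤ w x := by intro x; cases x <;> simp [hwdef] <;> linarith
  have hwsum : (∑ x : RStep, w x) < 1 := by
    have huniv : (Finset.univ : Finset RStep) =
        insert .U (insert .H (insert .D (insert .V {.B}))) := rfl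
    rw [huniv]
    rw [Finset.sum_insert (by decide), Finset.sum_insert (by decide),
      Finset.sum_insert (by decide), Finset.sum_insert (by decide), Finset.sum_singleton]
    show ρ + (θ + (θ + (θ + ρ))) < 1
    rw [hθdef]; linarith
  set M : ℝ := 1 + ∑ i ∈ Finset.range (n+r+1),
      (‖a i‖ + ‖b i‖ + ‖lam i‖) with hMdef
  have hsumnn : 0 ≤ ∑ i ∈ Finset.range (n+r+1),
      (‖a i‖ + ‖b i‖ + ‖lam i‖) :=
    Finset.sum_nonneg fun i _ => by positivity
  have hM1 : 1 ≤ M := by rw [hMdef]; linarith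
  have hterm : ∀ h : ℤ, 0 ≤ h → h ≤ (n:ℤ) + r →
      ‖a h.toNat‖ + ‖b h.toNat‖ + ‖lam h.toNat‖ ≤ M := by
    intro h h0 hX
    have hmem : h.toNat ∈ Finset.range (n+r+1) := by
      simp only [Finset.mem_range]; omega
    have := Finset.single_le_sum
      (f := fun i => ‖a i‖ + ‖b i‖ + ‖lam i‖)
      (fun i _ => by positivity) hmem
    beta_reduce at this
    rw [hMdef]; linarith
  have ha' : ∀ h : ℤ, 0 ≤ h → h ≤ (n:ℤ) + r → ‖a h.toNat‖ ≤ M := by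
    intro h h0 hX
    have := hterm h h0 hX
    have h1 := norm_nonneg (b h.toNat)
    have h2 := norm_nonneg (lam h.toNat)
    linarith
  have hb' : ∀ h : ℤ, 0 ≤ h → h ≤ (n:ℤ) + r → ‖b h.toNat‖ ≤ M := by
    intro h h0 hX
    have := hterm h h0 hX
    have h1 := norm_nonneg (a h.toNat)
    have h2 := norm_nonneg (lam h.toNat)
    linarith
  have hlam' : ∀ h : ℤ, 0 ≤ h → h ≤ (n:ℤ) + r → ‖lam h.toNat‖ ≤ M := by
    intro h h0 hX
    have := hterm h h0 hX
    have h1 := norm_nonneg (a h.toNat)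
    have h2 := norm_nonneg (b h.toNat)
    linarith
  have hc' : ∀ h : ℤ, 1 ≤ h → ‖c h.toNat‖ ≤ t := by
    intro h h1
    have : 1 ≤ h.toNat := by omega
    have := hc h.toNat this
    rw [htdef]; linarith [min_le_left ε (1/8 : ℝ)]
  have hD : (0:ℝ) < ρ ^ n * θ ^ (n+r) := by positivity
  apply Summable.of_norm_bounded
    (g := fun p : RGamma n r s => (M ^ (n+r) / (ρ ^ n * θ ^ (n+r))) * ((p.1).map w).prod)
  · exact ((summable_list_prod w hw hwsum).subtype (RGamma n r s)).mul_left _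
  · rintro ⟨l, ⟨hnn, hend⟩, hrest⟩
    simp only
    -- counts
    set u := l.count RStep.U
    set hh := l.count RStep.H
    set d := l.count RStep.D
    set v := l.count RStep.V
    set k := l.count RStep.B
    have hEnd := endPt_eq l (0, (r:ℤ))
    rw [hend] at hEnd
    rw [Prod.ext_iff] at hEnd
    obtain ⟨he1, he2⟩ := hEnd
    simp only at he1 he2
    have hq : hh + d + v ≤ n + r := by omega
    have hu : u + k ≤ 2*k + n := by omega
    -- the weight bound
    have hbdl : hbd ((n:ℤ) + r) ((0:ℤ), (r:ℤ)).2 l :=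
      hbd_of_points (n:ℤ) (r:ℤ) l ((0:ℤ), (r:ℤ)) (by simp) (by positivity) hrest
    have hwt := wt_bound a b lam c M t ((n:ℤ)+r) hM1 ht0.le ha' hb' hlam' hc'
      l (r:ℤ) (by positivity) hnn hbdl
    have hMpow : M ^ (hh + d + v) ≤ M ^ (n + r) := pow_le_pow_right₀ hM1 hq
    have key : t ^ k * (ρ ^ n * θ ^ (n+r)) ≤ ρ ^ (u+k) * θ ^ (hh+d+v) := by
      have e1 : t ^ k * ρ ^ n = ρ ^ (2*k + n) := by
        rw [← hρ2, ← pow_mul, ← pow_add]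
      have i1 : ρ ^ (2*k+n) ≤ ρ ^ (u+k) := pow_le_pow_of_le_one hρ0.le hρ1 hu
      have i2 : θ ^ (n+r) ≤ θ ^ (hh+d+v) := pow_le_pow_of_le_one hθ0.le hθ1 hq
      calc t ^ k * (ρ ^ n * θ ^ (n+r)) = (t ^ k * ρ ^ n) * θ ^ (n+r) := by ring
        _ = ρ ^ (2*k+n) * θ ^ (n+r) := by rw [e1]
        _ ≤ ρ ^ (u+k) * θ ^ (hh+d+v) :=
            mul_le_mul i1 i2 (by positivity) (by positivity)
    have hprod : (l.map w).prod = ρ ^ (u+k) * θ ^ (hh+d+v) := by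
      rw [prod_map_eq]
      show ρ ^ u * θ ^ hh * θ ^ d * θ ^ v * ρ ^ k = _
      rw [pow_add, pow_add, pow_add]; ring
    rw [div_mul_eq_mul_div, le_div_iff₀ hD, hprod]
    calc ‖pathWt a b lam c (r:ℤ) l‖ * (ρ ^ n * θ ^ (n+r))
        ≤ (M ^ (hh + d + v) * t ^ k) * (ρ ^ n * θ ^ (n+r)) :=
          mul_le_mul_of_nonneg_right hwt hD.le
      _ ≤ (M ^ (n+r) * t ^ k) * (ρ ^ n * θ ^ (n+r)) :=
          mul_le_mul_of_nonneg_right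
            (mul_le_mul_of_nonneg_right hMpow (pow_nonneg ht0.le k)) hD.le
      _ = M ^ (n+r) * (t ^ k * (ρ ^ n * θ ^ (n+r))) := by ring
      _ ≤ M ^ (n+r) * (ρ ^ (u+k) * θ ^ (hh+d+v)) :=
          mul_le_mul_of_nonneg_left key (by positivity)
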